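/- For all n, the number of permutations of [n] avoiding both generalized patterns 1-23 and 13-2 equals the n-th Motzkin number M_n. -/

import Mathlib

def contains123 {n : ℕ} (π : Equiv.Perm (Fin n)) : Prop :=
  ∃ i j : ℕ, ∃ (_ : i < j) (hj : j + 1 < n),
    π ⟨i, by omega⟩ < π ⟨j, by omega⟩ ∧ π ⟨j, by omega⟩ < π ⟨j + 1, hj⟩

def contains13_2 {n : ℕ} (π : Equiv.Perm (Fin n)) : Prop :=
  ∃ i j : ℕ, ∃ (_ : i + 1 < j) (hj : j < n),
    π ⟨i, by omega⟩ < π ⟨j, hj⟩ ∧ π ⟨j, hj⟩ < π ⟨i + 1, by omega⟩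

def motzkin : ℕ → ℕ
  | 0 => 1
  | n + 1 => motzkin n + ∑ k ∈ (Finset.range n).attach,
      motzkin k * motzkin (n - 1 - k)
  decreasing_by
  · exact Nat.lt_succ_self n
  · have := Finset.mem_range.mp k.2; omega
  · have := Finset.mem_range.mp k.2; omega

namespace MZ

open Equiv Finset

/-- value of a permutation at a natural index, 0 out of range -/
def pval {m : ℕ} (π : Perm (Fin m)) (i : ℕ) : ℕ :=
  if h : i < m then (π ⟨i, h⟩).val else 0

lemma pval_eq {m : ℕ} (π : Perm (Fin m)) {i : ℕ} (h : i < m) :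
    pval π i = (π ⟨i, h⟩).val := dif_pos h

lemma pval_lt {m : ℕ} (π : Perm (Fin m)) {i : ℕ} (h : i < m) : pval π i < m := by
  rw [pval_eq π h]; exact (π ⟨i, h⟩).isLt

lemma pval_inj {m : ℕ} (π : Perm (Fin m)) {i j : ℕ} (hi : i < m) (hj : j < m)
    (h : pval π i = pval π j) : i = j := by
  rw [pval_eq π hi, pval_eq π hj] at h
  have := π.injective (Fin.ext h)
  exact congrArg Fin.val this

lemma pval_lt_iff {m : ℕ} (π : Perm (Fin m)) {i j : ℕ} (h1 : i < m) (h2 : j < m) :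
    pval π i < pval π j ↔ π ⟨i, h1⟩ < π ⟨j, h2⟩ := by
  rw [pval_eq π h1, pval_eq π h2]; exact Iff.rfl

lemma c123_iff {m : ℕ} (π : Perm (Fin m)) :
    contains123 π ↔ ∃ i j : ℕ, i < j ∧ j + 1 < m ∧
      pval π i < pval π j ∧ pval π j < pval π (j + 1) := by
  constructor
  · rintro ⟨i, j, h1, h2, h3, h4⟩
    exact ⟨i, j, h1, h2, (pval_lt_iff π (by omega) (by omega)).mpr h3,
      (pval_lt_iff π (by omega) h2).mpr h4⟩
  · rintro ⟨i, j, h1, h2, h3, h4⟩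
    exact ⟨i, j, h1, h2, (pval_lt_iff π (by omega) (by omega)).mp h3,
      (pval_lt_iff π (by omega) h2).mp h4⟩

lemma c132_iff {m : ℕ} (π : Perm (Fin m)) :
    contains13_2 π ↔ ∃ i j : ℕ, i + 1 < j ∧ j < m ∧
      pval π i < pval π j ∧ pval π j < pval π (i + 1) := by
  constructor
  · rintro ⟨i, j, h1, h2, h3, h4⟩
    exact ⟨i, j, h1, h2, (pval_lt_iff π (by omega) h2).mpr h3,
      (pval_lt_iff π h2 (by omega)).mpr h4⟩
  · rintro ⟨i, j, h1, h2, h3, h4⟩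
    exact ⟨i, j, h1, h2, (pval_lt_iff π (by omega) h2).mp h3,
      (pval_lt_iff π h2 (by omega)).mp h4⟩

/-- build a permutation of `Fin m` from a ℕ-function -/
noncomputable def mkPerm (m : ℕ) (f : ℕ → ℕ) (hb : ∀ i, i < m → f i < m)
    (hinj : ∀ i j, i < m → j < m → f i = f j → i = j) : Perm (Fin m) :=
  Equiv.ofBijective (fun i => ⟨f i.val, hb _ i.isLt⟩)
    (Finite.injective_iff_bijective.mp fun a b h =>
      Fin.ext (hinj _ _ a.isLt b.isLt (by simpa using congrArg Fin.val h)))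

lemma pval_mkPerm (m : ℕ) (f : ℕ → ℕ) (hb : ∀ i, i < m → f i < m)
    (hinj : ∀ i j, i < m → j < m → f i = f j → i = j) {i : ℕ} (h : i < m) :
    pval (mkPerm m f hb hinj) i = f i := by
  rw [pval_eq _ h]; rfl

lemma perm_ext {m : ℕ} (π π' : Perm (Fin m)) (h : ∀ i, i < m → pval π i = pval π' i) :
    π = π' := by
  apply Equiv.ext
  intro i
  apply Fin.ext
  have := h i.val i.isLt
  rw [pval_eq π i.isLt, pval_eq π' i.isLt] at this
  exact this

/-! ### the combined permutation β·α·0·x -/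

noncomputable def combFun (n k : ℕ) (α : Perm (Fin k)) (β : Perm (Fin (n - 1 - k))) (i : ℕ) : ℕ :=
  if i < n - 1 - k then pval β i + (k + 2)
  else if i < n - 1 then pval α (i - (n - 1 - k)) + 1
  else if i = n - 1 then 0 else k + 1

lemma cf_cases {n k : ℕ} (hk : k < n) (α : Perm (Fin k)) (β : Perm (Fin (n - 1 - k)))
    (i : ℕ) (hi : i < n + 1) :
    (i < n - 1 - k ∧ combFun n k α β i = pval β i + (k + 2) ∧
      k + 2 ≤ combFun n k α β i ∧ combFun n k α β i ≤ n)
    ∨ (n - 1 - k ≤ i ∧ i < n - 1 ∧ combFun n k α β i = pval α (i - (n - 1 - k)) + 1 ∧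
      1 ≤ combFun n k α β i ∧ combFun n k α β i ≤ k)
    ∨ (i = n - 1 ∧ combFun n k α β i = 0)
    ∨ (i = n ∧ combFun n k α β i = k + 1) := by
  unfold combFun
  by_cases h1 : i < n - 1 - k
  · left
    have hb := pval_lt β h1
    rw [if_pos h1]
    exact ⟨h1, rfl, by omega, by omega⟩
  · by_cases h2 : i < n - 1
    · right; left
      rw [if_neg h1, if_pos h2]
      have ha := pval_lt α (show i - (n - 1 - k) < k by omega)
      exact ⟨by omega, h2, rfl, by omega, by omega⟩
    · by_cases h3 : i = n - 1
      · right; right; left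
        rw [if_neg h1, if_neg h2, if_pos h3]
        exact ⟨h3, rfl⟩
      · right; right; right
        rw [if_neg h1, if_neg h2, if_neg h3]
        exact ⟨by omega, rfl⟩

noncomputable def comb {n k : ℕ} (hk : k < n) (α : Perm (Fin k)) (β : Perm (Fin (n - 1 - k))) :
    Perm (Fin (n + 1)) :=
  mkPerm (n + 1) (combFun n k α β)
    (by
      intro i hi
      rcases cf_cases hk α β i hi with ⟨p1, pe, pb1, pb2⟩ | ⟨p1, p2, pe, pb1, pb2⟩ |
        ⟨p1, pe⟩ | ⟨p1, pe⟩ <;> omega)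
    (by
      intro i j hi hj h
      rcases cf_cases hk α β i hi with ⟨p1, pe, pb1, pb2⟩ | ⟨p1, p2, pe, pb1, pb2⟩ |
        ⟨p1, pe⟩ | ⟨p1, pe⟩ <;>
      rcases cf_cases hk α β j hj with ⟨q1, qe, qb1, qb2⟩ | ⟨q1, q2, qe, qb1, qb2⟩ |
        ⟨q1, qe⟩ | ⟨q1, qe⟩ <;>
      first
      | omega
      | (have := pval_inj β p1 q1 (by omega); omega)
      | (have := pval_inj α (show i - (n - 1 - k) < k by omega)
            (show j - (n - 1 - k) < k by omega) (by omega); omega))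

lemma pval_comb {n k : ℕ} (hk : k < n) (α : Perm (Fin k)) (β : Perm (Fin (n - 1 - k)))
    {i : ℕ} (h : i < n + 1) : pval (comb hk α β) i = combFun n k α β i :=
  pval_mkPerm _ _ _ _ h

lemma comb_no123 {n k : ℕ} (hk : k < n) (α : Perm (Fin k)) (β : Perm (Fin (n - 1 - k)))
    (hα : ¬ contains123 α) (hβ : ¬ contains123 β) : ¬ contains123 (comb hk α β) := by
  rw [c123_iff]
  rintro ⟨i, j, hij, hj, h1, h2⟩
  rw [pval_comb hk α β (show i < n + 1 by omega), pval_comb hk α β (show j < n + 1 by omega)] at h1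
  rw [pval_comb hk α β (show j < n + 1 by omega), pval_comb hk α β hj] at h2
  rcases cf_cases hk α β i (by omega) with ⟨p1, pe, pb1, pb2⟩ | ⟨p1, p2, pe, pb1, pb2⟩ |
    ⟨p1, pe⟩ | ⟨p1, pe⟩ <;>
  rcases cf_cases hk α β j (by omega) with ⟨q1, qe, qb1, qb2⟩ | ⟨q1, q2, qe, qb1, qb2⟩ |
    ⟨q1, qe⟩ | ⟨q1, qe⟩ <;>
  rcases cf_cases hk α β (j + 1) hj with ⟨r1, re, rb1, rb2⟩ | ⟨r1, r2, re, rb1, rb2⟩ |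
    ⟨r1, re⟩ | ⟨r1, re⟩ <;>
  first
  | omega
  | exact hβ ((c123_iff β).mpr ⟨i, j, hij, by omega, by omega, by omega⟩)
  | (rw [show (j + 1) - (n - 1 - k) = j - (n - 1 - k) + 1 from by omega] at re
     exact hα ((c123_iff α).mpr
       ⟨i - (n - 1 - k), j - (n - 1 - k), by omega, by omega, by omega, by omega⟩))

lemma comb_no132 {n k : ℕ} (hk : k < n) (α : Perm (Fin k)) (β : Perm (Fin (n - 1 - k)))
    (hα : ¬ contains13_2 α) (hβ : ¬ contains13_2 β) : ¬ contains13_2 (comb hk α β) := by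
  rw [c132_iff]
  rintro ⟨i, j, hij, hj, h1, h2⟩
  rw [pval_comb hk α β (show i < n + 1 by omega), pval_comb hk α β hj] at h1
  rw [pval_comb hk α β hj, pval_comb hk α β (show i + 1 < n + 1 by omega)] at h2
  rcases cf_cases hk α β i (by omega) with ⟨p1, pe, pb1, pb2⟩ | ⟨p1, p2, pe, pb1, pb2⟩ |
    ⟨p1, pe⟩ | ⟨p1, pe⟩ <;>
  rcases cf_cases hk α β (i + 1) (by omega) with ⟨q1, qe, qb1, qb2⟩ | ⟨q1, q2, qe, qb1, qb2⟩ |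
    ⟨q1, qe⟩ | ⟨q1, qe⟩ <;>
  rcases cf_cases hk α β j hj with ⟨r1, re, rb1, rb2⟩ | ⟨r1, r2, re, rb1, rb2⟩ |
    ⟨r1, re⟩ | ⟨r1, re⟩ <;>
  first
  | omega
  | exact hβ ((c132_iff β).mpr ⟨i, j, hij, by omega, by omega, by omega⟩)
  | (rw [show (i + 1) - (n - 1 - k) = i - (n - 1 - k) + 1 from by omega] at qe
     exact hα ((c132_iff α).mpr
       ⟨i - (n - 1 - k), j - (n - 1 - k), by omega, by omega, by omega, by omega⟩))

/-! ### appending a new minimum at the end -/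

def extFun (n : ℕ) (π : Perm (Fin n)) (i : ℕ) : ℕ :=
  if i < n then pval π i + 1 else 0

lemma ef_cases {n : ℕ} (π : Perm (Fin n)) (i : ℕ) (hi : i < n + 1) :
    (i < n ∧ extFun n π i = pval π i + 1 ∧ 1 ≤ extFun n π i ∧ extFun n π i ≤ n)
    ∨ (i = n ∧ extFun n π i = 0) := by
  unfold extFun
  by_cases h : i < n
  · left
    have := pval_lt π h
    rw [if_pos h]
    exact ⟨h, rfl, by omega, by omega⟩
  · right
    rw [if_neg h]
    exact ⟨by omega, rfl⟩

noncomputable def ext0 {n : ℕ} (π : Perm (Fin n)) : Perm (Fin (n + 1)) :=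
  mkPerm (n + 1) (extFun n π)
    (by
      intro i hi
      rcases ef_cases π i hi with ⟨p1, pe, pb1, pb2⟩ | ⟨p1, pe⟩ <;> omega)
    (by
      intro i j hi hj h
      rcases ef_cases π i hi with ⟨p1, pe, pb1, pb2⟩ | ⟨p1, pe⟩ <;>
      rcases ef_cases π j hj with ⟨q1, qe, qb1, qb2⟩ | ⟨q1, qe⟩ <;>
      first
      | omega
      | (have := pval_inj π p1 q1 (by omega); omega))

lemma pval_ext0 {n : ℕ} (π : Perm (Fin n)) {i : ℕ} (h : i < n + 1) :
    pval (ext0 π) i = extFun n π i :=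
  pval_mkPerm _ _ _ _ h

lemma ext0_no123 {n : ℕ} (π : Perm (Fin n)) (hπ : ¬ contains123 π) :
    ¬ contains123 (ext0 π) := by
  rw [c123_iff]
  rintro ⟨i, j, hij, hj, h1, h2⟩
  rw [pval_ext0 π (show i < n + 1 by omega), pval_ext0 π (show j < n + 1 by omega)] at h1
  rw [pval_ext0 π (show j < n + 1 by omega), pval_ext0 π hj] at h2
  rcases ef_cases π i (by omega) with ⟨p1, pe, pb1, pb2⟩ | ⟨p1, pe⟩ <;>
  rcases ef_cases π j (by omega) with ⟨q1, qe, qb1, qb2⟩ | ⟨q1, qe⟩ <;>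
  rcases ef_cases π (j + 1) hj with ⟨r1, re, rb1, rb2⟩ | ⟨r1, re⟩ <;>
  first
  | omega
  | exact hπ ((c123_iff π).mpr ⟨i, j, hij, by omega, by omega, by omega⟩)

lemma ext0_no132 {n : ℕ} (π : Perm (Fin n)) (hπ : ¬ contains13_2 π) :
    ¬ contains13_2 (ext0 π) := by
  rw [c132_iff]
  rintro ⟨i, j, hij, hj, h1, h2⟩
  rw [pval_ext0 π (show i < n + 1 by omega), pval_ext0 π (show j < n + 1 by omega)] at h1
  rw [pval_ext0 π (show j < n + 1 by omega), pval_ext0 π (show i + 1 < n + 1 by omega)] at h2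
  rcases ef_cases π i (by omega) with ⟨p1, pe, pb1, pb2⟩ | ⟨p1, pe⟩ <;>
  rcases ef_cases π (i + 1) (by omega) with ⟨q1, qe, qb1, qb2⟩ | ⟨q1, qe⟩ <;>
  rcases ef_cases π j (by omega) with ⟨r1, re, rb1, rb2⟩ | ⟨r1, re⟩ <;>
  first
  | omega
  | exact hπ ((c132_iff π).mpr ⟨i, j, hij, by omega, by omega, by omega⟩)

/-! ### extracting sub-permutations -/

noncomputable def subPerm {m : ℕ} (π : Perm (Fin m)) (off len shift : ℕ)
    (hm : ∀ j, j < len → off + j < m)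
    (hw : ∀ j, j < len → shift ≤ pval π (off + j) ∧ pval π (off + j) < shift + len) :
    Perm (Fin len) :=
  mkPerm len (fun i => pval π (off + i) - shift)
    (by intro i hi; have := hw i hi; show pval π (off + i) - shift < len; omega)
    (by
      intro i j hi hj h
      replace h : pval π (off + i) - shift = pval π (off + j) - shift := h
      have h1 := hw i hi
      have h2 := hw j hj
      have := pval_inj π (hm i hi) (hm j hj) (by omega)
      omega)

lemma pval_subPerm {m : ℕ} (π : Perm (Fin m)) (off len shift : ℕ)
    (hm : ∀ j, j < len → off + j < m)
    (hw : ∀ j, j < len → shift ≤ pval π (off + j) ∧ pval π (off + j) < shift + len)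
    {i : ℕ} (hi : i < len) :
    pval (subPerm π off len shift hm hw) i = pval π (off + i) - shift :=
  pval_mkPerm _ _ _ _ hi

lemma sub_no123 {m : ℕ} (π : Perm (Fin m)) (off len shift : ℕ)
    (hm : ∀ j, j < len → off + j < m)
    (hw : ∀ j, j < len → shift ≤ pval π (off + j) ∧ pval π (off + j) < shift + len)
    (hπ : ¬ contains123 π) : ¬ contains123 (subPerm π off len shift hm hw) := by
  rw [c123_iff]
  rintro ⟨i, j, hij, hj, h1, h2⟩
  rw [pval_subPerm π off len shift hm hw (show i < len by omega),
    pval_subPerm π off len shift hm hw (show j < len by omega)] at h1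
  rw [pval_subPerm π off len shift hm hw (show j < len by omega),
    pval_subPerm π off len shift hm hw hj] at h2
  have wi := hw i (by omega)
  have wj := hw j (by omega)
  have wj1 := hw (j + 1) hj
  apply hπ
  rw [c123_iff]
  refine ⟨off + i, off + j, by omega, by have := hm (j + 1) hj; omega, by omega, ?_⟩
  rw [show off + j + 1 = off + (j + 1) from by omega]
  omega

lemma sub_no132 {m : ℕ} (π : Perm (Fin m)) (off len shift : ℕ)
    (hm : ∀ j, j < len → off + j < m)
    (hw : ∀ j, j < len → shift ≤ pval π (off + j) ∧ pval π (off + j) < shift + len)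
    (hπ : ¬ contains13_2 π) : ¬ contains13_2 (subPerm π off len shift hm hw) := by
  rw [c132_iff]
  rintro ⟨i, j, hij, hj, h1, h2⟩
  rw [pval_subPerm π off len shift hm hw (show i < len by omega),
    pval_subPerm π off len shift hm hw hj] at h1
  rw [pval_subPerm π off len shift hm hw hj,
    pval_subPerm π off len shift hm hw (show i + 1 < len by omega)] at h2
  have wi := hw i (by omega)
  have wj := hw j hj
  have wi1 := hw (i + 1) (by omega)
  apply hπ
  rw [c132_iff]
  refine ⟨off + i, off + j, by omega, by have := hm j hj; omega, by omega, ?_⟩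
  rw [show off + i + 1 = off + (i + 1) from by omega]
  omega

/-! ### structure of avoiders -/

lemma zero_late {m : ℕ} (π : Perm (Fin m)) (h123 : ¬ contains123 π)
    (h132 : ¬ contains13_2 π) (p : ℕ) (hp2 : p + 1 + 1 < m) (h0 : pval π p = 0) : False := by
  have a2 : 1 ≤ pval π (p + 1) := by
    rcases Nat.eq_zero_or_pos (pval π (p + 1)) with h | h
    · have := pval_inj π (show p + 1 < m by omega) (show p < m by omega) (by omega); omega
    · omega
  have a3 : 1 ≤ pval π (p + 1 + 1) := by
    rcases Nat.eq_zero_or_pos (pval π (p + 1 + 1)) with h | h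
    · have := pval_inj π hp2 (show p < m by omega) (by omega); omega
    · omega
  have a1 : pval π (p + 1) ≠ pval π (p + 1 + 1) := fun he => by
    have := pval_inj π (show p + 1 < m by omega) hp2 he; omega
  rcases Nat.lt_or_ge (pval π (p + 1)) (pval π (p + 1 + 1)) with h | h
  · exact h123 ((c123_iff π).mpr ⟨p, p + 1, by omega, hp2, by omega, by omega⟩)
  · exact h132 ((c132_iff π).mpr ⟨p, p + 1 + 1, by omega, hp2, by omega, by omega⟩)

lemma upclosed (S : Finset ℕ) (N : ℕ) (hlt : ∀ s ∈ S, s < N)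
    (hup : ∀ s ∈ S, ∀ j, s ≤ j → j < N → j ∈ S) :
    S = Finset.Ico (N - S.card) N := by
  rcases S.eq_empty_or_nonempty with rfl | hne
  · simp
  · have hmin := S.min'_mem hne
    have hS : S = Finset.Ico (S.min' hne) N := by
      ext a
      simp only [Finset.mem_Ico]
      constructor
      · intro ha; exact ⟨S.min'_le a ha, hlt a ha⟩
      · rintro ⟨ha1, ha2⟩; exact hup _ hmin a ha1 ha2
    have hmle := hlt _ hmin
    rw [hS, Nat.card_Ico]
    congr 1
    omega

/-! ### evaluation lemmas for combFun -/

lemma cf_lo_eval {n k : ℕ} (α : Perm (Fin k)) (β : Perm (Fin (n - 1 - k))) {i : ℕ}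
    (hi : i < n - 1 - k) : combFun n k α β i = pval β i + (k + 2) := by
  unfold combFun; rw [if_pos hi]

lemma cf_mid_eval {n k : ℕ} (hk : k < n) (α : Perm (Fin k)) (β : Perm (Fin (n - 1 - k)))
    {i : ℕ} (hi : i < k) : combFun n k α β (n - 1 - k + i) = pval α i + 1 := by
  unfold combFun
  rw [if_neg (by omega), if_pos (by omega), show n - 1 - k + i - (n - 1 - k) = i from by omega]

lemma cf_top {n k : ℕ} (hk : k < n) (α : Perm (Fin k)) (β : Perm (Fin (n - 1 - k))) :
    combFun n k α β n = k + 1 := by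
  unfold combFun
  rw [if_neg (by omega), if_neg (by omega), if_neg (by omega)]

/-! ### the bijection -/

abbrev A (m : ℕ) := {π : Perm (Fin m) // ¬ contains123 π ∧ ¬ contains13_2 π}

noncomputable def Phi (n : ℕ) :
    (A n ⊕ (k : {x // x ∈ Finset.range n}) × (A k.val × A (n - 1 - k.val))) → A (n + 1)
  | .inl ⟨σ, h1, h2⟩ => ⟨ext0 σ, ext0_no123 σ h1, ext0_no132 σ h2⟩
  | .inr ⟨⟨k, hk⟩, ⟨α, ha1, ha2⟩, ⟨β, hb1, hb2⟩⟩ =>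
      ⟨comb (Finset.mem_range.mp hk) α β,
        comb_no123 (Finset.mem_range.mp hk) α β ha1 hb1,
        comb_no132 (Finset.mem_range.mp hk) α β ha2 hb2⟩

lemma Phi_inj (n : ℕ) : Function.Injective (Phi n) := by
  rintro (⟨σ, hσ1, hσ2⟩ | ⟨⟨k, hk⟩, ⟨α, hα1, hα2⟩, ⟨β, hβ1, hβ2⟩⟩)
    (⟨τ, hτ1, hτ2⟩ | ⟨⟨k', hk'⟩, ⟨α', hα1', hα2'⟩, ⟨β', hβ1', hβ2'⟩⟩) h <;>
    simp only [Phi, Subtype.mk.injEq] at h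
  · -- inl inl
    have : σ = τ := by
      apply perm_ext
      intro i hi
      have e := congrArg (fun ρ => pval ρ i) h
      rw [pval_ext0 σ (by omega), pval_ext0 τ (by omega)] at e
      unfold extFun at e
      rw [if_pos hi, if_pos hi] at e
      omega
    subst this
    rfl
  · -- inl inr
    exfalso
    have e := congrArg (fun ρ => pval ρ n) h
    rw [pval_ext0 σ (by omega), pval_comb (Finset.mem_range.mp hk') α' β' (by omega)] at e
    rw [cf_top (Finset.mem_range.mp hk') α' β'] at e
    unfold extFun at e
    rw [if_neg (by omega)] at e
    omega
  · -- inr inl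
    exfalso
    have e := congrArg (fun ρ => pval ρ n) h
    rw [pval_ext0 τ (by omega), pval_comb (Finset.mem_range.mp hk) α β (by omega)] at e
    rw [cf_top (Finset.mem_range.mp hk) α β] at e
    unfold extFun at e
    rw [if_neg (by omega)] at e
    omega
  · -- inr inr
    have hkn := Finset.mem_range.mp hk
    have hkn' := Finset.mem_range.mp hk'
    have ecf : ∀ i, i < n + 1 → combFun n k α β i = combFun n k' α' β' i := by
      intro i hi
      have e := congrArg (fun ρ => pval ρ i) h
      rw [pval_comb hkn α β hi, pval_comb hkn' α' β' hi] at e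
      exact e
    obtain rfl : k = k' := by
      have := ecf n (by omega)
      rw [cf_top hkn α β, cf_top hkn' α' β'] at this
      omega
    obtain rfl : α = α' := by
      apply perm_ext
      intro i hi
      have hi' : i < k := hi
      have := ecf (n - 1 - k + i) (by omega)
      rw [cf_mid_eval hkn α β hi', cf_mid_eval hkn' α' β' hi'] at this
      omega
    obtain rfl : β = β' := by
      apply perm_ext
      intro i hi
      have hi' : i < n - 1 - k := hi
      have := ecf i (by omega)
      rw [cf_lo_eval α β hi', cf_lo_eval α β' hi'] at this
      omega
    rfl

lemma Phi_surj (n : ℕ) : Function.Surjective (Phi n) := by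
  rintro ⟨π, h123, h132⟩
  obtain ⟨p, hpdef⟩ : ∃ p, ((π.symm 0).val) = p := ⟨_, rfl⟩
  have hplt : p < n + 1 := hpdef ▸ (π.symm 0).isLt
  have hp : pval π p = 0 := by
    rw [← hpdef, pval_eq π (π.symm 0).isLt]
    have h2 : (⟨(π.symm 0).val, (π.symm 0).isLt⟩ : Fin (n + 1)) = π.symm 0 := rfl
    rw [h2, Equiv.apply_symm_apply]
    rfl
  have hple : ¬ (p + 1 + 1 < n + 1) := fun hcon => zero_late π h123 h132 p hcon hp
  by_cases hpn : p = n
  · -- case A : 0 at the last position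
    have hpos : ∀ i, i < n → 1 ≤ pval π i := by
      intro i hi
      rcases Nat.eq_zero_or_pos (pval π i) with h | h
      · have := pval_inj π (show i < n + 1 by omega) hplt (by omega); omega
      · omega
    have hm : ∀ j, j < n → 0 + j < n + 1 := by intro j hj; omega
    have hw : ∀ j, j < n → 1 ≤ pval π (0 + j) ∧ pval π (0 + j) < 1 + n := by
      intro j hj
      have h1 := hpos j hj
      have h2 := pval_lt π (show j < n + 1 by omega)
      simp only [Nat.zero_add]
      omega
    refine ⟨Sum.inl ⟨subPerm π 0 n 1 hm hw,
      sub_no123 π 0 n 1 hm hw h123, sub_no132 π 0 n 1 hm hw h132⟩, ?_⟩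
    apply Subtype.ext
    show ext0 (subPerm π 0 n 1 hm hw) = π
    apply perm_ext
    intro i hi
    rw [pval_ext0 _ hi]
    unfold extFun
    by_cases hin : i < n
    · rw [if_pos hin, pval_subPerm π 0 n 1 hm hw hin]
      have h1 := hpos i hin
      simp only [Nat.zero_add]
      omega
    · rw [if_neg hin]
      have hin' : i = n := by omega
      have h0 : pval π n = 0 := hpn ▸ hp
      rw [hin', h0]
  · -- case B : 0 at the second-to-last position
    have hn1 : 1 ≤ n := by omega
    have hpn1 : p = n - 1 := by omega
    have hx1 : 1 ≤ pval π n := by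
      rcases Nat.eq_zero_or_pos (pval π n) with h | h
      · have := pval_inj π (show n < n + 1 by omega) hplt (by omega); omega
      · omega
    have hxn : pval π n ≤ n := by have := pval_lt π (show n < n + 1 by omega); omega
    obtain ⟨k, hkx⟩ : ∃ k, pval π n = k + 1 := ⟨pval π n - 1, by omega⟩
    have hk : k < n := by omega
    have step : ∀ j, j + 1 < n → pval π j ≤ k → pval π (j + 1) ≤ k := by
      intro j hj hlt
      by_contra hge
      have hne : pval π (j + 1) ≠ pval π n := fun he => by
        have := pval_inj π (show j + 1 < n + 1 by omega) (show n < n + 1 by omega) he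
        omega
      exact h132 ((c132_iff π).mpr ⟨j, n, by omega, by omega, by omega, by omega⟩)
    have mono : ∀ d i, i + d < n → pval π i ≤ k → pval π (i + d) ≤ k := by
      intro d
      induction d with
      | zero => intro i h hlt; exact hlt
      | succ d ih =>
        intro i h hlt
        have hd : pval π (i + d) ≤ k := ih i (by omega) hlt
        have := step (i + d) (by omega) hd
        rw [show i + (d + 1) = i + d + 1 from by omega]
        exact this
    -- the set of positions holding values 1..k
    set S : Finset ℕ := Finset.image (fun v : Fin (n + 1) => (π.symm v).val)
      (Finset.univ.filter (fun v : Fin (n + 1) => 1 ≤ v.val ∧ v.val ≤ k)) with hSdef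
    have memS : ∀ s, s ∈ S ↔ (s < n + 1 ∧ 1 ≤ pval π s ∧ pval π s ≤ k) := by
      intro s
      constructor
      · intro hs
        simp only [hSdef, Finset.mem_image, Finset.mem_filter, Finset.mem_univ, true_and] at hs
        obtain ⟨v, hv, rfl⟩ := hs
        refine ⟨(π.symm v).isLt, ?_⟩
        have : pval π (π.symm v).val = v.val := by
          rw [pval_eq π (π.symm v).isLt]
          have h2 : (⟨(π.symm v).val, (π.symm v).isLt⟩ : Fin (n + 1)) = π.symm v := rfl
          rw [h2, Equiv.apply_symm_apply]
        rw [this]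
        exact hv
      · rintro ⟨h1, h2, h3⟩
        simp only [hSdef, Finset.mem_image, Finset.mem_filter, Finset.mem_univ, true_and]
        refine ⟨π ⟨s, h1⟩, ?_, ?_⟩
        · rw [← pval_eq π h1]; exact ⟨h2, h3⟩
        · rw [Equiv.symm_apply_apply]
    have hfc : (Finset.univ.filter (fun v : Fin (n + 1) => 1 ≤ v.val ∧ v.val ≤ k)).card
        = (Finset.Ico 1 (k + 1)).card := by
      apply Finset.card_nbij (fun v : Fin (n + 1) => v.val)
      · intro a ha
        simp only [Finset.coe_filter, Finset.mem_filter, Finset.mem_univ, true_and, Set.mem_setOf_eq] at ha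
        simp only [Finset.coe_Ico, Set.mem_Ico, Finset.mem_Ico]
        omega
      · intro a _ b _ hab
        exact Fin.ext hab
      · intro t ht
        simp only [Finset.coe_Ico, Set.mem_Ico] at ht
        refine ⟨⟨t, by omega⟩, ?_, rfl⟩
        simp only [Finset.coe_filter, Finset.mem_univ, true_and, Set.mem_setOf_eq]
        exact ⟨ht.1, by omega⟩
    have hScard : S.card = k := by
      rw [hSdef, Finset.card_image_of_injective _
        (fun a b hab => π.symm.injective (Fin.ext hab)), hfc, Nat.card_Ico]
      omega
    have hzero : pval π (n - 1) = 0 := by rw [← hpn1]; exact hp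
    have hSlt : ∀ s ∈ S, s < n - 1 := by
      intro s hs
      rw [memS] at hs
      obtain ⟨h1, h2, h3⟩ := hs
      have hs1 : s ≠ n - 1 := fun he => by rw [he, hzero] at h2; omega
      have hs2 : s ≠ n := fun he => by rw [he] at h3; omega
      omega
    have hSup : ∀ s ∈ S, ∀ j, s ≤ j → j < n - 1 → j ∈ S := by
      intro s hs j hsj hj
      rw [memS] at hs ⊢
      obtain ⟨h1, h2, h3⟩ := hs
      have hmono := mono (j - s) s (by omega) (by omega)
      rw [show s + (j - s) = j from by omega] at hmono
      have hj0 : pval π j ≠ 0 := fun he => by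
        have := pval_inj π (show j < n + 1 by omega) (show n - 1 < n + 1 by omega)
          (by rw [he, hzero])
        omega
      exact ⟨by omega, by omega, by omega⟩
    have hSIco : S = Finset.Ico (n - 1 - k) (n - 1) := by
      have := upclosed S (n - 1) hSlt hSup
      rw [hScard] at this
      exact this
    have Pmid : ∀ j, n - 1 - k ≤ j → j < n - 1 → 1 ≤ pval π j ∧ pval π j ≤ k := by
      intro j hj1 hj2
      have : j ∈ S := by rw [hSIco]; simp only [Finset.mem_Ico]; omega
      rw [memS] at this
      omega
    have Plo : ∀ i, i < n - 1 - k → k + 2 ≤ pval π i := by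
      intro i hi
      have hnot : i ∉ S := by rw [hSIco]; simp only [Finset.mem_Ico]; omega
      rw [memS] at hnot
      push_neg at hnot
      have h1 := hnot (by omega)
      have hi0 : pval π i ≠ 0 := fun he => by
        have := pval_inj π (show i < n + 1 by omega) (show n - 1 < n + 1 by omega)
          (by rw [he, hzero])
        omega
      have hix : pval π i ≠ pval π n := fun he => by
        have := pval_inj π (show i < n + 1 by omega) (show n < n + 1 by omega) he
        omega
      omega
    have hmα : ∀ j, j < k → (n - 1 - k) + j < n + 1 := by intro j hj; omega
    have hwα : ∀ j, j < k → 1 ≤ pval π ((n - 1 - k) + j) ∧ pval π ((n - 1 - k) + j) < 1 + k := by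
      intro j hj
      have := Pmid ((n - 1 - k) + j) (by omega) (by omega)
      omega
    have hmβ : ∀ j, j < n - 1 - k → 0 + j < n + 1 := by intro j hj; omega
    have hwβ : ∀ j, j < n - 1 - k →
        k + 2 ≤ pval π (0 + j) ∧ pval π (0 + j) < k + 2 + (n - 1 - k) := by
      intro j hj
      have h1 := Plo j hj
      have h2 := pval_lt π (show j < n + 1 by omega)
      simp only [Nat.zero_add]
      omega
    refine ⟨Sum.inr ⟨⟨k, Finset.mem_range.mpr hk⟩,
      ⟨subPerm π (n - 1 - k) k 1 hmα hwα,
        sub_no123 π (n - 1 - k) k 1 hmα hwα h123, sub_no132 π (n - 1 - k) k 1 hmα hwα h132⟩,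
      ⟨subPerm π 0 (n - 1 - k) (k + 2) hmβ hwβ,
        sub_no123 π 0 (n - 1 - k) (k + 2) hmβ hwβ h123,
        sub_no132 π 0 (n - 1 - k) (k + 2) hmβ hwβ h132⟩⟩, ?_⟩
    apply Subtype.ext
    show comb (Finset.mem_range.mp (Finset.mem_range.mpr hk)) _ _ = π
    apply perm_ext
    intro i hi
    rw [pval_comb _ _ _ hi]
    rcases cf_cases (Finset.mem_range.mp (Finset.mem_range.mpr hk)) _ _ i hi with
      ⟨p1, pe, pb1, pb2⟩ | ⟨p1, p2, pe, pb1, pb2⟩ | ⟨p1, pe⟩ | ⟨p1, pe⟩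
    · rw [pe, pval_subPerm π 0 (n - 1 - k) (k + 2) hmβ hwβ p1]
      have := Plo i p1
      simp only [Nat.zero_add]
      omega
    · rw [pe, pval_subPerm π (n - 1 - k) k 1 hmα hwα (show i - (n - 1 - k) < k by omega)]
      rw [show n - 1 - k + (i - (n - 1 - k)) = i from by omega]
      have := Pmid i (by omega) (by omega)
      omega
    · rw [pe, p1, hzero]
    · rw [pe, p1]
      omega


lemma card_sigma' {ι : Type} [Fintype ι] (f : ι → Type) [∀ i, Finite (f i)] :
    Nat.card ((i : ι) × f i) = ∑ i, Nat.card (f i) := by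
  have : ∀ i, Fintype (f i) := fun i => Fintype.ofFinite (f i)
  simp [Nat.card_eq_fintype_card, Fintype.card_sigma]

end MZ

theorem stmt11 (n : ℕ) :
    Nat.card {π : Equiv.Perm (Fin n) // ¬ contains123 π ∧ ¬ contains13_2 π} = motzkin n := by
  induction n using Nat.strong_induction_on with
  | _ n ih =>
  rcases n with _ | m
  · have hall : ∀ π : Equiv.Perm (Fin 0), ¬ contains123 π ∧ ¬ contains13_2 π := by
      intro π
      constructor
      · rintro ⟨i, j, -, hj, -⟩; omega
      · rintro ⟨i, j, -, hj, -⟩; omega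
    rw [Nat.card_congr (Equiv.subtypeUnivEquiv hall), Nat.card_eq_fintype_card, motzkin]
    simp
  · have hbij : Function.Bijective (MZ.Phi m) := ⟨MZ.Phi_inj m, MZ.Phi_surj m⟩
    calc Nat.card (MZ.A (m + 1))
        = Nat.card (MZ.A m) +
          Nat.card ((k : {x // x ∈ Finset.range m}) × (MZ.A k.val × MZ.A (m - 1 - k.val))) := by
          rw [← Nat.card_congr (Equiv.ofBijective _ hbij), Nat.card_sum]
      _ = motzkin m + ∑ k ∈ (Finset.range m).attach, motzkin k.val * motzkin (m - 1 - k.val) := by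
          rw [ih m (by omega), MZ.card_sigma']
          congr 1
          rw [Finset.univ_eq_attach]
          refine Finset.sum_congr rfl (fun k _ => ?_)
          have hk := Finset.mem_range.mp k.2
          rw [Nat.card_prod, ih k.val (by omega), ih (m - 1 - k.val) (by omega)]
      _ = motzkin (m + 1) := by rw [motzkin]
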